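/- For any integer partitions: if ν is a partition with at most n parts and k ≤ n, then the sum over ε ∈ {0,1}^n with |ε| = k of s_{ν+ε}(x_1,...,x_n) (with the convention that the Schur polynomial vanishes when ν+ε is not a partition) equals e_k(x_1,...,x_n) · s_ν(x_1,...,x_n), where e_k is the elementary symmetric polynomial of degree k in n variables. -/

import Mathlib

open scoped Classical

/-- The Schur polynomial of a vector `μ : Fin n → ℕ`, given by the Weyl
(bialternant) formula when `μ` is a partition (weakly decreasing), and `0`
otherwise (0-based: the 1-based exponent `μ_i + n - i` is `μ i + (n - 1 - i)`). -/
noncomputable def schurC {K : Type*} [Field K] (n : ℕ) (μ : Fin n → ℕ)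
    (x : Fin n → K) : K :=
  if ∀ i j : Fin n, i ≤ j → μ j ≤ μ i then
    (Matrix.of fun i j : Fin n => x j ^ (μ i + (n - 1 - (i : ℕ)))).det /
    (Matrix.of fun i j : Fin n => x j ^ (n - 1 - (i : ℕ))).det
  else 0

open Finset

lemma alternant_pieri {K : Type*} [Field K] (n k : ℕ) (α : Fin n → ℕ) (x : Fin n → K) :
    ∑ T ∈ Finset.powersetCard k (Finset.univ : Finset (Fin n)),
      (Matrix.of fun i j : Fin n => x j ^ (α i + if i ∈ T then 1 else 0)).det
    = (∑ s ∈ Finset.powersetCard k (Finset.univ : Finset (Fin n)), ∏ i ∈ s, x i) *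
      (Matrix.of fun i j : Fin n => x j ^ α i).det := by
  simp only [Matrix.det_apply, Matrix.of_apply, Finset.sum_mul, Finset.mul_sum]
  rw [Finset.sum_comm]
  refine Finset.sum_congr rfl fun σ _ => ?_
  refine Finset.sum_nbij' (fun T => T.image σ.symm) (fun s => s.image σ) ?_ ?_ ?_ ?_ ?_
  · intro T hT
    rw [Finset.mem_powersetCard_univ] at hT ⊢
    rw [Finset.card_image_of_injective _ σ.symm.injective, hT]
  · intro s hs
    rw [Finset.mem_powersetCard_univ] at hs ⊢
    rw [Finset.card_image_of_injective _ σ.injective, hs]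
  · intro T _; simp [Finset.image_image]
  · intro s _; simp [Finset.image_image]
  · intro T _
    rw [mul_smul_comm]
    congr 1
    have key : ∀ j : Fin n, x j ^ (if σ j ∈ T then 1 else 0)
        = if j ∈ T.image σ.symm then x j else 1 := by
      intro j
      have h : j ∈ T.image σ.symm ↔ σ j ∈ T := by
        simp [Finset.mem_image, Equiv.eq_symm_apply, eq_comm]
      by_cases hc : σ j ∈ T <;> simp [h, hc]
    have h1 : ∏ j, x j ^ (α (σ j) + if σ j ∈ T then 1 else 0)
        = (∏ j, x j ^ α (σ j)) * ∏ j, x j ^ (if σ j ∈ T then 1 else 0) := by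
      rw [← Finset.prod_mul_distrib]
      exact Finset.prod_congr rfl fun j _ => pow_add _ _ _
    have h2 : ∏ j, x j ^ (if σ j ∈ T then 1 else 0)
        = ∏ i ∈ T.image σ.symm, x i := by
      rw [Finset.prod_congr rfl fun j _ => key j]
      exact Fintype.prod_ite_mem _ _
    rw [h1, h2, mul_comm]

/-- the dual Pieri rule. For a partition `ν` with at most `n` parts and
`k ≤ n`, `Σ_{ε ∈ {0,1}^n, |ε| = k} s_{ν+ε}(x) = e_k(x) · s_ν(x)`, with the convention
that `s_{ν+ε} = 0` when `ν+ε` is not a partition; here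
`e_k(x) = Σ_{S ⊆ {1,...,n}, |S| = k} ∏_{i ∈ S} x_i`. -/
theorem dual_pieri_rule {K : Type*} [Field K] (n : ℕ) (ν : Fin n → ℕ)
    (hν : Antitone ν) (k : ℕ) (hk : k ≤ n) (x : Fin n → K) :
    ∑ ε ∈ Finset.univ.filter
        (fun ε : Fin n → Bool => (Finset.univ.filter (fun i => ε i = true)).card = k),
      schurC n (fun i => ν i + if ε i then 1 else 0) x
      = (∑ s ∈ Finset.powersetCard k (Finset.univ : Finset (Fin n)), ∏ i ∈ s, x i) *
          schurC n ν x := by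
  classical
  set V := (Matrix.of fun i j : Fin n => x j ^ (n - 1 - (i : ℕ))).det with hV
  have step1 : ∀ ε : Fin n → Bool,
      schurC n (fun i => ν i + if ε i then 1 else 0) x
      = (Matrix.of fun i j : Fin n =>
          x j ^ ((ν i + if ε i then 1 else 0) + (n - 1 - (i : ℕ)))).det / V := by
    intro ε
    by_cases h : ∀ i j : Fin n, i ≤ j →
        (ν j + if ε j then 1 else 0) ≤ (ν i + if ε i then 1 else 0)
    · rw [schurC, if_pos h]
    · rw [schurC, if_neg h]
      obtain ⟨m, rfl⟩ : ∃ m, n = m + 1 := by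
        cases n with
        | zero => exact absurd (fun i _ _ => i.elim0) h
        | succ m => exact ⟨m, rfl⟩
      have hna : ¬ ∀ i : Fin m,
          (ν i.succ + if ε i.succ then 1 else 0)
            ≤ (ν i.castSucc + if ε i.castSucc then 1 else 0) := by
        intro hA
        exact h fun i j hij =>
          ((Fin.antitone_iff_succ_le (f := fun i : Fin (m + 1) =>
            ν i + if ε i then 1 else 0)).mpr hA) hij
      push_neg at hna
      obtain ⟨i, hi⟩ := hna
      symm
      rw [eq_comm, Matrix.det_zero_of_row_eq (Fin.castSucc_lt_succ (i := i)).ne ?_, zero_div]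
      funext j
      simp only [Matrix.of_apply]
      congr 1
      have e1 : ν i.succ ≤ ν i.castSucc := hν (Fin.castSucc_lt_succ (i := i)).le
      have hlt : (i : ℕ) < m := i.isLt
      simp only [Fin.coe_castSucc, Fin.val_succ]
      set a := (if ε i.castSucc then 1 else 0 : ℕ) with ha'
      set b := (if ε i.succ then 1 else 0 : ℕ) with hb'
      have ha : a ≤ 1 := by rw [ha']; split <;> omega
      have hb : b ≤ 1 := by rw [hb']; split <;> omega
      omega
  rw [Finset.sum_congr rfl fun ε _ => step1 ε, ← Finset.sum_div]
  have step2 :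
      (∑ ε ∈ Finset.univ.filter
          (fun ε : Fin n → Bool => (Finset.univ.filter (fun i => ε i = true)).card = k),
        (Matrix.of fun i j : Fin n =>
          x j ^ ((ν i + if ε i then 1 else 0) + (n - 1 - (i : ℕ)))).det)
      = ∑ T ∈ Finset.powersetCard k (Finset.univ : Finset (Fin n)),
        (Matrix.of fun i j : Fin n =>
          x j ^ (((ν i + (n - 1 - (i : ℕ))) + if i ∈ T then 1 else 0))).det := by
    refine Finset.sum_nbij' (fun ε => Finset.univ.filter (fun i => ε i = true))
      (fun T => fun i => decide (i ∈ T)) ?_ ?_ ?_ ?_ ?_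
    · intro ε hε
      exact Finset.mem_powersetCard_univ.mpr (Finset.mem_filter.mp hε).2
    · intro T hT
      refine Finset.mem_filter.mpr ⟨Finset.mem_univ _, ?_⟩
      simpa using Finset.mem_powersetCard_univ.mp hT
    · intro ε _; funext i; simp
    · intro T _; simp
    · intro ε _
      congr 1
      ext i j
      simp only [Matrix.of_apply, Finset.mem_filter, Finset.mem_univ, true_and]
      congr 1
      by_cases hc : ε i = true <;> simp [hc] <;> omega
  rw [step2]
  have h3 := alternant_pieri n k (fun i => ν i + (n - 1 - (i : ℕ))) x
  rw [h3, mul_div_assoc]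
  congr 1
  rw [schurC, if_pos fun i j h => hν h]
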